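/- arXiv:2203.05838 — 13 statements merged into one kernel-verified Lean document; each statement's English description precedes it below -/
import Mathlib

section
/- Let λ ∈ (0,1). There exists a unique threshold equilibrium, i.e., a unique c* ∈ (0,T) satisfying c* = λ·R/(F(c*)·H + M) − (1−λ)·R/((1−F(c*))·H), if and only if λ > M/(H+M). -/
set_option maxHeartbeats 1000000

private lemma staking_aux_anti
    (H M R lam : ℝ) (T : EReal) (F : ℝ → ℝ)
    (hH : 0 < H) (hM : 0 < M) (hR : 0 < R)
    (hF0 : F 0 = 0)
    (hFmono : ∀ c₁ c₂ : ℝ, 0 ≤ c₁ → c₁ < c₂ → (c₂ : EReal) < T → F c₁ < F c₂)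
    (hFlt1 : ∀ c : ℝ, 0 ≤ c → (c : EReal) < T → F c < 1)
    (hlam : 0 < lam ∧ lam < 1)
    (c₁ c₂ : ℝ) (h1 : 0 ≤ c₁) (h12 : c₁ < c₂) (h2T : (c₂ : EReal) < T) :
    lam * R / (F c₂ * H + M) - (1 - lam) * R / ((1 - F c₂) * H)
      < lam * R / (F c₁ * H + M) - (1 - lam) * R / ((1 - F c₁) * H) := by
  have h1T : (c₁ : EReal) < T := lt_trans (by exact_mod_cast h12) h2T
  have hF1nn : 0 ≤ F c₁ := by
    rcases eq_or_lt_of_le h1 with h | h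
    · rw [← h, hF0]
    · exact le_of_lt (hF0 ▸ hFmono 0 c₁ le_rfl h h1T)
  have hFF : F c₁ < F c₂ := hFmono c₁ c₂ h1 h12 h2T
  have hF2lt1 : F c₂ < 1 := hFlt1 c₂ (h1.trans h12.le) h2T
  have hF1lt1 : F c₁ < 1 := lt_trans hFF hF2lt1
  have hd1 : 0 < F c₁ * H + M := by positivity
  have hd2 : F c₁ * H + M < F c₂ * H + M := by nlinarith
  have hd1' : 0 < (1 - F c₂) * H := by nlinarith
  have hd2' : (1 - F c₂) * H < (1 - F c₁) * H := by nlinarith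
  have hA : lam * R / (F c₂ * H + M) ≤ lam * R / (F c₁ * H + M) :=
    le_of_lt (div_lt_div_of_pos_left (mul_pos hlam.1 hR) hd1 hd2)
  have hB : (1 - lam) * R / ((1 - F c₁) * H) < (1 - lam) * R / ((1 - F c₂) * H) :=
    div_lt_div_of_pos_left (mul_pos (by linarith [hlam.2]) hR) hd1' hd2'
  linarith

/-- Let `λ ∈ (0,1)`. There exists a unique threshold equilibrium,
i.e., a unique `c* ∈ (0,T)` satisfying
`c* = λ·R/(F(c*)·H + M) − (1−λ)·R/((1−F(c*))·H)`, if and only if `λ > M/(H+M)`. -/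
theorem staking_threshold_equilibrium_existence_unique
    (H M R lam : ℝ) (T : EReal) (F : ℝ → ℝ)
    (hH : 0 < H) (hM : 0 < M) (hMH : M < H) (hR : 0 < R)
    (hT : 0 < T)
    (hF0 : F 0 = 0)
    (hFmono : ∀ c₁ c₂ : ℝ, 0 ≤ c₁ → c₁ < c₂ → (c₂ : EReal) < T → F c₁ < F c₂)
    (hFcont : ContinuousOn F {c : ℝ | 0 ≤ c ∧ (c : EReal) < T})
    (hFlt1 : ∀ c : ℝ, 0 ≤ c → (c : EReal) < T → F c < 1)
    (hFlim : ∀ y : ℝ, y < 1 → ∃ c : ℝ, 0 ≤ c ∧ (c : EReal) < T ∧ y < F c)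
    (hlam : 0 < lam ∧ lam < 1) :
    (∃! c : ℝ, (0 < c ∧ (c : EReal) < T) ∧
        c = lam * R / (F c * H + M) - (1 - lam) * R / ((1 - F c) * H))
      ↔ M / (H + M) < lam := by
  obtain ⟨hlam0, hlam1⟩ := hlam
  have anti := staking_aux_anti H M R lam T F hH hM hR hF0 hFmono hFlt1 ⟨hlam0, hlam1⟩
  have hG0 : lam * R / (F 0 * H + M) - (1 - lam) * R / ((1 - F 0) * H)
      = lam * R / M - (1 - lam) * R / H := by
    rw [hF0]; ring_nf
  constructor
  · rintro ⟨c, ⟨⟨hc0, hcT⟩, hceq⟩, -⟩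
    have h := anti 0 c le_rfl hc0 hcT
    rw [hG0] at h
    have hpos : 0 < lam * R / M - (1 - lam) * R / H := lt_trans (hceq ▸ hc0) h
    rw [div_lt_iff₀ (by positivity)]
    have : (1 - lam) * R / H < lam * R / M := by linarith
    rw [div_lt_div_iff₀ hH hM] at this
    nlinarith
  · intro hlamM
    rw [div_lt_iff₀ (by positivity)] at hlamM
    -- G(0) > 0
    have hG0pos : 0 < lam * R / M - (1 - lam) * R / H := by
      rw [sub_pos, div_lt_div_iff₀ hH hM]
      nlinarith
    have h1l : (0:ℝ) < 1 - lam := by linarith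
    -- pick c₁ with F c₁ close to 1
    set y : ℝ := max (1/2) (1 - (1 - lam) * M / (2 * lam * H)) with hy
    have hy1 : y < 1 := by
      apply max_lt (by norm_num)
      have : 0 < (1 - lam) * M / (2 * lam * H) := div_pos (mul_pos h1l hM) (by positivity)
      linarith
    obtain ⟨c₁, hc₁0, hc₁T, hc₁F⟩ := hFlim y hy1
    have hyge : 1 - (1 - lam) * M / (2 * lam * H) ≤ y := le_max_right _ _
    have hFc₁ : 1 - F c₁ < (1 - lam) * M / (2 * lam * H) := by
      have := lt_of_le_of_lt hyge hc₁F; linarith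
    have hFc₁lt1 : F c₁ < 1 := hFlt1 c₁ hc₁0 hc₁T
    have hFc₁pos : (1/2 : ℝ) < F c₁ := lt_of_le_of_lt (le_max_left _ _) hc₁F
    have hc₁pos : 0 < c₁ := by
      rcases eq_or_lt_of_le hc₁0 with h | h
      · exfalso; rw [← h, hF0] at hFc₁pos; linarith
      · exact h
    have hFc₁nn : 0 ≤ F c₁ := by linarith
    -- G(c₁) < 0
    have hGc₁neg : lam * R / (F c₁ * H + M) - (1 - lam) * R / ((1 - F c₁) * H) < 0 := by
      have hA : lam * R / (F c₁ * H + M) ≤ lam * R / M := by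
        apply div_le_div_of_nonneg_left (by positivity) hM
        nlinarith
      have hd : 0 < (1 - F c₁) * H := by nlinarith
      have hd' : (1 - F c₁) * H < (1 - lam) * M / (2 * lam) := by
        have h2 : (1 - lam) * M / (2 * lam * H) * H = (1 - lam) * M / (2 * lam) := by
          field_simp
        nlinarith [hFc₁]
      have hB : lam * R / M + 0 < (1 - lam) * R / ((1 - F c₁) * H) := by
        have hstep : (1 - lam) * R / ((1 - lam) * M / (2 * lam)) <
            (1 - lam) * R / ((1 - F c₁) * H) :=
          div_lt_div_of_pos_left (mul_pos h1l hR) hd hd'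
        have hval : (1 - lam) * R / ((1 - lam) * M / (2 * lam)) = 2 * lam * R / M := by
          rw [div_eq_div_iff (by positivity) hM.ne']
          field_simp
        rw [hval] at hstep
        have : lam * R / M < 2 * lam * R / M := by
          apply div_lt_div_of_pos_right _ hM
          nlinarith
        linarith
      linarith
    -- IVT on g(c) = G(c) - c over [0, c₁]
    set g : ℝ → ℝ := fun c =>
      lam * R / (F c * H + M) - (1 - lam) * R / ((1 - F c) * H) - c with hgdef
    have hsub : Set.Icc (0:ℝ) c₁ ⊆ {c : ℝ | 0 ≤ c ∧ (c : EReal) < T} := by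
      rintro x ⟨hx0, hx1⟩
      exact ⟨hx0, lt_of_le_of_lt (by exact_mod_cast hx1) hc₁T⟩
    have hFx : ∀ x ∈ Set.Icc (0:ℝ) c₁, 0 ≤ F x ∧ F x < 1 := by
      rintro x ⟨hx0, hx1⟩
      have hxT : (x : EReal) < T := lt_of_le_of_lt (by exact_mod_cast hx1) hc₁T
      refine ⟨?_, hFlt1 x hx0 hxT⟩
      rcases eq_or_lt_of_le hx0 with h | h
      · rw [← h, hF0]
      · exact le_of_lt (hF0 ▸ hFmono 0 x le_rfl h hxT)
    have hFc : ContinuousOn F (Set.Icc (0:ℝ) c₁) := hFcont.mono hsub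
    have hgcont : ContinuousOn g (Set.Icc (0:ℝ) c₁) := by
      apply ContinuousOn.sub _ continuousOn_id
      apply ContinuousOn.sub
      · apply ContinuousOn.div continuousOn_const
          ((hFc.mul continuousOn_const).add continuousOn_const)
        intro x hx
        have := (hFx x hx).1
        show F x * H + M ≠ 0
        positivity
      · apply ContinuousOn.div continuousOn_const
          ((continuousOn_const.sub hFc).mul continuousOn_const)
        intro x hx
        have h1 := (hFx x hx).2
        have : 0 < (1 - F x) * H := by nlinarith
        show (1 - F x) * H ≠ 0
        linarith
    have hg0 : 0 < g 0 := by
      simp only [hgdef, hG0]; linarith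
    have hgc₁ : g c₁ < 0 := by
      simp only [hgdef]; linarith
    have h0mem : (0:ℝ) ∈ Set.Ioo (g c₁) (g 0) := ⟨hgc₁, hg0⟩
    obtain ⟨c, hcmem, hgc⟩ := intermediate_value_Ioo' hc₁pos.le hgcont h0mem
    obtain ⟨hc0, hcc₁⟩ := hcmem
    have hcT : (c : EReal) < T := lt_trans (by exact_mod_cast hcc₁) hc₁T
    refine ⟨c, ⟨⟨hc0, hcT⟩, ?_⟩, ?_⟩
    · simp only [hgdef] at hgc; linarith
    · rintro c' ⟨⟨hc'0, hc'T⟩, hc'eq⟩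
      have hceq : c = lam * R / (F c * H + M) - (1 - lam) * R / ((1 - F c) * H) := by
        simp only [hgdef] at hgc; linarith
      rcases lt_trichotomy c' c with h | h | h
      · exfalso
        have := anti c' c hc'0.le h hcT
        rw [← hceq, ← hc'eq] at this
        linarith
      · exact h
      · exfalso
        have := anti c c' hc0.le h hc'T
        rw [← hceq, ← hc'eq] at this
        linarith
end

section
/- If M/(H+M) < λ₁ < λ₂ < 1 and c₁*, c₂* ∈ (0,T) are the respective threshold equilibria (c_i* = G_{λ_i}(c_i*)), then c₁* < c₂*. In other words, the equilibrium cost threshold c*(λ) is strictly increasing in the reward share λ kept by pool owners. -/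
/-- If `M/(H+M) < λ₁ < λ₂ < 1` and `c₁*, c₂* ∈ (0,T)` are the respective
threshold equilibria, then `c₁* < c₂*`: the equilibrium cost threshold is strictly
increasing in the reward share `λ` kept by pool owners. -/
theorem threshold_equilibrium_strict_mono_in_lambda
    (H M R : ℝ) (T : EReal) (F : ℝ → ℝ)
    (hH : 0 < H) (hM : 0 < M) (hMH : M < H) (hR : 0 < R)
    (hT : 0 < T)
    (hF0 : F 0 = 0)
    (hFmono : ∀ c₁ c₂ : ℝ, 0 ≤ c₁ → c₁ < c₂ → (c₂ : EReal) < T → F c₁ < F c₂)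
    (hFcont : ContinuousOn F {c : ℝ | 0 ≤ c ∧ (c : EReal) < T})
    (hFlt1 : ∀ c : ℝ, 0 ≤ c → (c : EReal) < T → F c < 1)
    (hFlim : ∀ y : ℝ, y < 1 → ∃ c : ℝ, 0 ≤ c ∧ (c : EReal) < T ∧ y < F c)
    (lam₁ lam₂ c₁ c₂ : ℝ)
    (hlam₁ : M / (H + M) < lam₁) (hlam₁₂ : lam₁ < lam₂) (hlam₂ : lam₂ < 1)
    (hc₁ : 0 < c₁ ∧ (c₁ : EReal) < T)
    (heq₁ : c₁ = lam₁ * R / (F c₁ * H + M) - (1 - lam₁) * R / ((1 - F c₁) * H))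
    (hc₂ : 0 < c₂ ∧ (c₂ : EReal) < T)
    (heq₂ : c₂ = lam₂ * R / (F c₂ * H + M) - (1 - lam₂) * R / ((1 - F c₂) * H)) :
    c₁ < c₂ := by
  obtain ⟨hc₁0, hc₁T⟩ := hc₁
  obtain ⟨hc₂0, hc₂T⟩ := hc₂
  by_contra h
  push_neg at h
  -- h : c₂ ≤ c₁
  have hf₂f₁ : F c₂ ≤ F c₁ := by
    rcases eq_or_lt_of_le h with he | hlt
    · rw [he]
    · exact le_of_lt (hFmono c₂ c₁ hc₂0.le hlt hc₁T)
  have hf₁0 : 0 ≤ F c₁ := by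
    have := hFmono 0 c₁ le_rfl hc₁0 hc₁T
    rw [hF0] at this; linarith
  have hf₂0 : 0 ≤ F c₂ := by
    have := hFmono 0 c₂ le_rfl hc₂0 hc₂T
    rw [hF0] at this; linarith
  have hf₁1 : F c₁ < 1 := hFlt1 c₁ hc₁0.le hc₁T
  have hf₂1 : F c₂ < 1 := hFlt1 c₂ hc₂0.le hc₂T
  set f₁ := F c₁
  set f₂ := F c₂
  have ha₁ : 0 < f₁ * H + M := by nlinarith
  have ha₂ : 0 < f₂ * H + M := by nlinarith
  have hb₁ : 0 < (1 - f₁) * H := by nlinarith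
  have hb₂ : 0 < (1 - f₂) * H := by nlinarith
  have hlam₁0 : 0 < lam₁ := lt_trans (div_pos hM (by linarith)) hlam₁
  -- G_{λ₂} is antitone in f: value at f₂ ≥ value at f₁
  have step1 : lam₂ * R / (f₁ * H + M) - (1 - lam₂) * R / ((1 - f₁) * H)
      ≤ lam₂ * R / (f₂ * H + M) - (1 - lam₂) * R / ((1 - f₂) * H) := by
    have h1 : lam₂ * R / (f₁ * H + M) ≤ lam₂ * R / (f₂ * H + M) := by
      apply div_le_div_of_nonneg_left (by nlinarith) ha₂
      nlinarith
    have h2 : (1 - lam₂) * R / ((1 - f₂) * H) ≤ (1 - lam₂) * R / ((1 - f₁) * H) := by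
      apply div_le_div_of_nonneg_left (by nlinarith) hb₁
      nlinarith
    linarith
  -- G is strictly increasing in λ at f₁
  have step2 : lam₁ * R / (f₁ * H + M) - (1 - lam₁) * R / ((1 - f₁) * H)
      < lam₂ * R / (f₁ * H + M) - (1 - lam₂) * R / ((1 - f₁) * H) := by
    have h1 : lam₁ * R / (f₁ * H + M) < lam₂ * R / (f₁ * H + M) := by
      gcongr


    have h2 : (1 - lam₂) * R / ((1 - f₁) * H) < (1 - lam₁) * R / ((1 - f₁) * H) := by
      gcongr

    linarith
  rw [heq₁] at h
  rw [heq₂] at h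
  linarith
end

section
/- If λ = M/(H+M), then the only c ∈ [0,T) satisfying c = λ·R/(F(c)·H + M) − (1−λ)·R/((1−F(c))·H) is c = 0; hence all honest agents delegate and malicious agents control all stakes. -/
/-- If `λ = M/(H+M)`, then the only `c ∈ [0,T)` satisfying the
indifference equation `c = λ·R/(F(c)·H + M) − (1−λ)·R/((1−F(c))·H)` is `c = 0`;
hence all honest agents delegate and malicious agents control all stakes. -/
theorem threshold_equilibrium_boundary_lambda
    (H M R : ℝ) (T : EReal) (F : ℝ → ℝ)
    (hH : 0 < H) (hM : 0 < M) (hMH : M < H) (hR : 0 < R)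
    (hT : 0 < T)
    (hF0 : F 0 = 0)
    (hFmono : ∀ c₁ c₂ : ℝ, 0 ≤ c₁ → c₁ < c₂ → (c₂ : EReal) < T → F c₁ < F c₂)
    (hFcont : ContinuousOn F {c : ℝ | 0 ≤ c ∧ (c : EReal) < T})
    (hFlt1 : ∀ c : ℝ, 0 ≤ c → (c : EReal) < T → F c < 1)
    (hFlim : ∀ y : ℝ, y < 1 → ∃ c : ℝ, 0 ≤ c ∧ (c : EReal) < T ∧ y < F c)
    :
    ∀ c : ℝ, 0 ≤ c → (c : EReal) < T →
      (c = (M / (H + M)) * R / (F c * H + M)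
            - (1 - M / (H + M)) * R / ((1 - F c) * H)
        ↔ c = 0) := by
  intro c hc hcT
  have hHM : 0 < H + M := by linarith
  constructor
  · intro hEq
    by_contra hne
    have hcpos : 0 < c := lt_of_le_of_ne hc (Ne.symm hne)
    have hfpos : 0 < F c := by
      have := hFmono 0 c le_rfl hcpos hcT
      rwa [hF0] at this
    have hflt1 : F c < 1 := hFlt1 c hc hcT
    set f := F c with hf
    have hd1 : 0 < f * H + M := by positivity
    have hd2 : 0 < (1 - f) * H := by
      have : 0 < 1 - f := by linarith
      positivity
    have hAB : (M / (H + M)) * R / (f * H + M)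
        < (1 - M / (H + M)) * R / ((1 - f) * H) := by
      rw [div_lt_div_iff₀ hd1 hd2]
      have h1 : 1 - M / (H + M) = H / (H + M) := by field_simp; ring
      rw [h1]
      rw [div_mul_eq_mul_div, div_mul_eq_mul_div, div_mul_eq_mul_div,
        div_mul_eq_mul_div, div_lt_div_iff₀ hHM hHM]
      have key : M * (1 - f) < f * H + M := by nlinarith
      nlinarith [mul_pos (mul_pos hH hR) hHM, key]
    linarith
  · intro h0
    subst h0
    rw [hF0]
    have h1 : 1 - M / (H + M) = H / (H + M) := by field_simp; ring
    rw [h1]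
    field_simp
    ring
end

section
/- If 0 ≤ λ < M/(H+M), then there exists no c ∈ [0,T) satisfying c = λ·R/(F(c)·H + M) − (1−λ)·R/((1−F(c))·H); in particular no equilibrium exists in which a positive measure of honest agents run pools. -/
/-- If `0 ≤ λ < M/(H+M)`, then there exists no `c ∈ [0,T)` satisfying
the indifference equation `c = λ·R/(F(c)·H + M) − (1−λ)·R/((1−F(c))·H)`; in particular
no equilibrium exists in which a positive measure of honest agents run pools. -/
theorem no_threshold_equilibrium_low_lambda
    (H M R lam : ℝ) (T : EReal) (F : ℝ → ℝ)
    (hH : 0 < H) (hM : 0 < M) (hMH : M < H) (hR : 0 < R)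
    (hT : 0 < T)
    (hF0 : F 0 = 0)
    (hFmono : ∀ c₁ c₂ : ℝ, 0 ≤ c₁ → c₁ < c₂ → (c₂ : EReal) < T → F c₁ < F c₂)
    (hFcont : ContinuousOn F {c : ℝ | 0 ≤ c ∧ (c : EReal) < T})
    (hFlt1 : ∀ c : ℝ, 0 ≤ c → (c : EReal) < T → F c < 1)
    (hFlim : ∀ y : ℝ, y < 1 → ∃ c : ℝ, 0 ≤ c ∧ (c : EReal) < T ∧ y < F c)
    (hlam : 0 ≤ lam ∧ lam < M / (H + M)) :
    ¬ ∃ c : ℝ, 0 ≤ c ∧ (c : EReal) < T ∧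
        c = lam * R / (F c * H + M) - (1 - lam) * R / ((1 - F c) * H) := by
  rintro ⟨c, hc0, hcT, heq⟩
  obtain ⟨hlam0, hlamlt⟩ := hlam
  -- F c ∈ [0, 1)
  have hFge : 0 ≤ F c := by
    rcases eq_or_lt_of_le hc0 with h | h
    · rw [← h, hF0]
    · have := hFmono 0 c le_rfl h hcT
      rw [hF0] at this; exact this.le
  have hFlt : F c < 1 := hFlt1 c hc0 hcT
  -- λ H < M (1 - λ)
  have hHM : (0:ℝ) < H + M := by linarith
  have hkey : lam * H < M * (1 - lam) := by
    have := (lt_div_iff₀ hHM).mp hlamlt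
    nlinarith
  have hlam1 : lam < 1 := by
    nlinarith
  have hd1 : 0 < F c * H + M := by nlinarith
  have hd2 : 0 < (1 - F c) * H := by nlinarith
  -- RHS < 0
  have hlt : lam * R / (F c * H + M) < (1 - lam) * R / ((1 - F c) * H) := by
    rw [div_lt_div_iff₀ hd1 hd2]
    have h2 : lam * ((1 - F c) * H) < (1 - lam) * (F c * H + M) := by
      nlinarith [mul_nonneg hlam0 (mul_nonneg hFge hH.le),
        mul_nonneg (by linarith : (0:ℝ) ≤ 1 - lam) (mul_nonneg hFge hH.le)]
    nlinarith [mul_lt_mul_of_pos_right h2 hR]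
  have : c < 0 := by rw [heq]; linarith
  linarith
end

section
/- If T > R/(H+M) (which holds automatically when T = ∞), then there exists a unique c₁ ∈ (0,T) satisfying c₁ = R/(F(c₁)·H + M); this is the threshold equilibrium of the staking pool formation game for λ = 1. -/
/-- If `T > R/(H+M)` (automatic when `T = ∞`), then there exists a
unique `c₁ ∈ (0,T)` satisfying `c₁ = R/(F(c₁)·H + M)`; this is the threshold
equilibrium of the staking pool formation game for `λ = 1`. -/
theorem lambda_one_equilibrium_exists_unique
    (H M R : ℝ) (T : EReal) (F : ℝ → ℝ)
    (hH : 0 < H) (hM : 0 < M) (hMH : M < H) (hR : 0 < R)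
    (hT : 0 < T)
    (hF0 : F 0 = 0)
    (hFmono : ∀ c₁ c₂ : ℝ, 0 ≤ c₁ → c₁ < c₂ → (c₂ : EReal) < T → F c₁ < F c₂)
    (hFcont : ContinuousOn F {c : ℝ | 0 ≤ c ∧ (c : EReal) < T})
    (hFlt1 : ∀ c : ℝ, 0 ≤ c → (c : EReal) < T → F c < 1)
    (hFlim : ∀ y : ℝ, y < 1 → ∃ c : ℝ, 0 ≤ c ∧ (c : EReal) < T ∧ y < F c)
    (hT' : ((R / (H + M) : ℝ) : EReal) < T) :
    ∃! c : ℝ, (0 < c ∧ (c : EReal) < T) ∧ c = R / (F c * H + M) := by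
  have hHM : (0:ℝ) < H + M := by linarith
  set c₀ : ℝ := R / (H + M) with hc₀def
  have hc₀pos : 0 < c₀ := div_pos hR hHM
  -- pick a real d with c₀ < d and (d : EReal) < T
  obtain ⟨z, hz1, hz2⟩ := exists_between hT'
  have hzt : z ≠ ⊤ := (hz2.trans_le le_top).ne
  have hzb : z ≠ ⊥ := ((EReal.bot_lt_coe c₀).trans hz1).ne'
  set d : ℝ := z.toReal with hddef
  have hdz : (d : EReal) = z := EReal.coe_toReal hzt hzb
  have hc₀d : c₀ < d := by
    have : (c₀ : EReal) < (d : EReal) := by rw [hdz]; exact hz1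
    exact_mod_cast this
  have hdT : (d : EReal) < T := by rw [hdz]; exact hz2
  have hdpos : 0 < d := hc₀pos.trans hc₀d
  -- R/d < H + M
  have hRd : R / d < H + M := by
    have h1 : R / d < R / c₀ := div_lt_div_of_pos_left hR hc₀pos hc₀d
    have h2 : R / c₀ = H + M := by
      rw [hc₀def]; field_simp
    linarith
  set y : ℝ := (R / d - M) / H with hydef
  have hy1 : y < 1 := by
    rw [hydef, div_lt_one hH]; linarith
  obtain ⟨cs, hcs0, hcsT, hcsF⟩ := hFlim y hy1
  set b : ℝ := max cs d with hbdef
  have hbT : (b : EReal) < T := by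
    rcases le_total cs d with h | h
    · rw [hbdef, max_eq_right h]; exact hdT
    · rw [hbdef, max_eq_left h]; exact hcsT
  have hdb : d ≤ b := le_max_right cs d
  have hbpos : 0 < b := hdpos.trans_le hdb
  have hFb : y < F b := by
    rcases eq_or_lt_of_le (le_max_left cs d) with h | h
    · rw [hbdef, ← h]; exact hcsF
    · exact hcsF.trans (hFmono cs b hcs0 h hbT)
  have hFbpos : 0 < F b := by
    have := hFmono 0 b le_rfl hbpos hbT
    rwa [hF0] at this
  -- key: R < b * (F b * H + M)
  have hkey1 : R / d < F b * H + M := by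
    have h1 : y * H < F b * H := mul_lt_mul_of_pos_right hFb hH
    have h2 : y * H = R / d - M := by rw [hydef, div_mul_cancel₀ _ hH.ne']
    linarith
  have hDbpos : 0 < F b * H + M := by positivity
  have hgb : R < b * (F b * H + M) := by
    have h1 : R = d * (R / d) := (mul_div_cancel₀ R hdpos.ne').symm
    have h2 : d * (R / d) < d * (F b * H + M) := by
      exact mul_lt_mul_of_pos_left hkey1 hdpos
    have h3 : d * (F b * H + M) ≤ b * (F b * H + M) :=
      mul_le_mul_of_nonneg_right hdb hDbpos.le
    linarith
  -- continuity of g on [0, b]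
  have hsub : Set.Icc (0:ℝ) b ⊆ {c : ℝ | 0 ≤ c ∧ (c : EReal) < T} := by
    intro x hx
    refine ⟨hx.1, lt_of_le_of_lt ?_ hbT⟩
    exact_mod_cast hx.2
  have hgcont : ContinuousOn (fun c => c * (F c * H + M)) (Set.Icc (0:ℝ) b) := by
    exact continuousOn_id.mul (((hFcont.mono hsub).mul continuousOn_const).add
      continuousOn_const)
  have hg0 : (fun c => c * (F c * H + M)) 0 = 0 := by simp
  have hmem : R ∈ Set.Ioo ((fun c => c * (F c * H + M)) 0)
      ((fun c => c * (F c * H + M)) b) := by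
    constructor
    · rw [hg0]; exact hR
    · exact hgb
  obtain ⟨c, hcIoo, hgc'⟩ := intermediate_value_Ioo hbpos.le hgcont hmem
  have hgc : c * (F c * H + M) = R := hgc'
  have hcpos : 0 < c := hcIoo.1
  have hcT : (c : EReal) < T := lt_trans (by exact_mod_cast hcIoo.2) hbT
  have hFcpos : 0 < F c := by
    have := hFmono 0 c le_rfl hcpos hcT
    rwa [hF0] at this
  have hDcpos : 0 < F c * H + M := by positivity
  have hceq : c = R / (F c * H + M) := by
    rw [eq_div_iff hDcpos.ne']; exact hgc
  refine ⟨c, ⟨⟨hcpos, hcT⟩, hceq⟩, ?_⟩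
  rintro c' ⟨⟨hc'pos, hc'T⟩, hc'eq⟩
  have hFc'pos : 0 < F c' := by
    have := hFmono 0 c' le_rfl hc'pos hc'T
    rwa [hF0] at this
  have hDc'pos : 0 < F c' * H + M := by positivity
  have hgc' : c' * (F c' * H + M) = R := by
    rw [eq_div_iff hDc'pos.ne'] at hc'eq; exact hc'eq
  by_contra hne
  rcases lt_or_gt_of_ne hne with hlt | hlt
  · have hF : F c' < F c := hFmono c' c hc'pos.le hlt hcT
    have hD : F c' * H + M < F c * H + M := by
      have := mul_lt_mul_of_pos_right hF hH; linarith
    have : c' * (F c' * H + M) < c * (F c * H + M) :=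
      mul_lt_mul' hlt.le hD hDc'pos.le hcpos
    rw [hgc', hgc] at this; exact lt_irrefl R this
  · have hF : F c < F c' := hFmono c c' hcpos.le hlt hc'T
    have hD : F c * H + M < F c' * H + M := by
      have := mul_lt_mul_of_pos_right hF hH; linarith
    have : c * (F c * H + M) < c' * (F c' * H + M) :=
      mul_lt_mul' hlt.le hD hDcpos.le hc'pos
    rw [hgc', hgc] at this; exact lt_irrefl R this
end

section
/- The fraction of honest agents running a pool is maximized at λ = 1: if M/(H+M) < λ < 1 and c*(λ) ∈ (0,T) satisfies c*(λ) = λ·R/(F(c*(λ))·H + M) − (1−λ)·R/((1−F(c*(λ)))·H), and c₁ ∈ (0,T) satisfies c₁ = R/(F(c₁)·H + M), then c*(λ) < c₁, and hence F(c*(λ))·H < F(c₁)·H. -/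
/-- The fraction of honest agents running a pool is maximized at
`λ = 1`: if `M/(H+M) < λ < 1` and `c*(λ) ∈ (0,T)` is the threshold equilibrium for
`λ`, and `c₁ ∈ (0,T)` satisfies `c₁ = R/(F(c₁)·H + M)`, then `c*(λ) < c₁` and hence
`F(c*(λ))·H < F(c₁)·H`. -/
theorem pool_share_maximized_at_lambda_one
    (H M R lam : ℝ) (T : EReal) (F : ℝ → ℝ)
    (hH : 0 < H) (hM : 0 < M) (hMH : M < H) (hR : 0 < R)
    (hT : 0 < T)
    (hF0 : F 0 = 0)
    (hFmono : ∀ c₁ c₂ : ℝ, 0 ≤ c₁ → c₁ < c₂ → (c₂ : EReal) < T → F c₁ < F c₂)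
    (hFcont : ContinuousOn F {c : ℝ | 0 ≤ c ∧ (c : EReal) < T})
    (hFlt1 : ∀ c : ℝ, 0 ≤ c → (c : EReal) < T → F c < 1)
    (hFlim : ∀ y : ℝ, y < 1 → ∃ c : ℝ, 0 ≤ c ∧ (c : EReal) < T ∧ y < F c)
    (hlam : M / (H + M) < lam ∧ lam < 1)
    (cstar c₁ : ℝ)
    (hcstar : 0 < cstar ∧ (cstar : EReal) < T)
    (heq : cstar = lam * R / (F cstar * H + M)
                    - (1 - lam) * R / ((1 - F cstar) * H))
    (hc₁ : 0 < c₁ ∧ (c₁ : EReal) < T)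
    (heq₁ : c₁ = R / (F c₁ * H + M)) :
    cstar < c₁ ∧ F cstar * H < F c₁ * H := by
  obtain ⟨hcs0, hcsT⟩ := hcstar
  obtain ⟨hc10, hc1T⟩ := hc₁
  have hFcs0 : 0 < F cstar := by
    have := hFmono 0 cstar le_rfl hcs0 hcsT
    simpa [hF0] using this
  have hFcs1 : F cstar < 1 := hFlt1 cstar hcs0.le hcsT
  have hD : 0 < F cstar * H + M := by positivity
  have hE : 0 < (1 - F cstar) * H := by
    have : 0 < 1 - F cstar := by linarith
    positivity
  have hlam0 : 0 < lam := lt_trans (by positivity) hlam.1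
  -- cstar < R / D
  have h1 : lam * R / (F cstar * H + M) < R / (F cstar * H + M) := by
    have hlR : lam * R < R := by nlinarith
    exact (div_lt_div_iff_of_pos_right hD).mpr hlR
  have h2 : 0 < (1 - lam) * R / ((1 - F cstar) * H) := by
    have : 0 < 1 - lam := by linarith [hlam.2]
    positivity
  have hkey : cstar < R / (F cstar * H + M) := by
    linarith
  have hlt : cstar < c₁ := by
    by_contra h
    push_neg at h
    have hF : F c₁ ≤ F cstar := by
      rcases lt_or_eq_of_le h with h' | h'
      · exact (hFmono c₁ cstar hc10.le h' hcsT).le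
      · rw [h']
    have hFc10 : 0 ≤ F c₁ := by
      have := hFmono 0 c₁ le_rfl hc10 hc1T
      simpa [hF0] using this |>.le
    have hD₁ : 0 < F c₁ * H + M := by positivity
    have : R / (F cstar * H + M) ≤ R / (F c₁ * H + M) := by
      gcongr
    rw [← heq₁] at this
    linarith
  refine ⟨hlt, ?_⟩
  have := hFmono cstar c₁ hcs0.le hlt hc1T
  nlinarith
end

section
/- Suppose the cost density f = F' is differentiable with f > 0 and f' ≤ 0 on (0,T) (i.e., F'' ≤ 0). If H·M ≥ (H+M)²·T, then the social welfare W is maximized on [0,T] at c = T. If H·M < (H+M)²·T, then there is a unique c° ∈ (0,T) maximizing W on [0,T]. -/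
open Set MeasureTheory intervalIntegral

/-- Suppose the cost density `f = F'` is differentiable with `f > 0` and
`f' ≤ 0` on `(0,T)` (i.e. `F'' ≤ 0`). If `H·M ≥ (H+M)²·T`, then the social welfare `W`
is maximized on `[0,T]` at `c = T`. If `H·M < (H+M)²·T`, then there is a unique
`c° ∈ (0,T)` maximizing `W` on `[0,T]`. -/
theorem welfare_maximizer_characterization
    (H M T : ℝ) (F f f' W : ℝ → ℝ)
    (hH : 0 < H) (hM : 0 < M) (hMH : M < H) (hT : 0 < T)
    (hF0 : F 0 = 0) (hFT : F T = 1)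
    (hFmono : StrictMonoOn F (Set.Icc 0 T))
    (hf : ∀ c ∈ Set.Icc (0:ℝ) T, HasDerivAt F (f c) c)
    (hf' : ∀ c ∈ Set.Ioo (0:ℝ) T, HasDerivAt f (f' c) c)
    (hfpos : ∀ c ∈ Set.Ioo (0:ℝ) T, 0 < f c)
    (hf'nonpos : ∀ c ∈ Set.Ioo (0:ℝ) T, f' c ≤ 0)
    (hW : ∀ c : ℝ, W c = F c * H ^ 2 / (F c * H + M) - H * ∫ x in (0:ℝ)..c, x * f x) :
    (H * M ≥ (H + M) ^ 2 * T → ∀ c ∈ Set.Icc (0:ℝ) T, W c ≤ W T) ∧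
    (H * M < (H + M) ^ 2 * T →
      ∃! c : ℝ, c ∈ Set.Ioo (0:ℝ) T ∧ ∀ x ∈ Set.Icc (0:ℝ) T, W x ≤ W c) := by
  have h0T : (0:ℝ) ∈ Icc (0:ℝ) T := ⟨le_rfl, hT.le⟩
  have hTT : T ∈ Icc (0:ℝ) T := ⟨hT.le, le_rfl⟩
  -- continuity facts
  have hFcont : ContinuousOn F (Icc 0 T) := fun c hc => ((hf c hc).continuousAt).continuousWithinAt
  have hfcont : ContinuousOn f (Ioo 0 T) := fun c hc => ((hf' c hc).continuousAt).continuousWithinAt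
  -- bounds on F
  have hFnonneg : ∀ c ∈ Icc (0:ℝ) T, 0 ≤ F c := by
    intro c hc
    rcases eq_or_lt_of_le hc.1 with h | h
    · rw [← h, hF0]
    · rw [← hF0]; exact (hFmono h0T hc h).le
  have hFle1 : ∀ c ∈ Icc (0:ℝ) T, F c ≤ 1 := by
    intro c hc
    rcases eq_or_lt_of_le hc.2 with h | h
    · rw [h, hFT]
    · rw [← hFT]; exact (hFmono hc hTT h).le
  -- f is antitone
  have hfanti : AntitoneOn f (Ioo 0 T) := by
    apply antitoneOn_of_deriv_nonpos (convex_Ioo 0 T) hfcont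
    · intro x hx
      rw [interior_Ioo] at hx
      exact ((hf' x hx).differentiableAt).differentiableWithinAt
    · intro x hx
      rw [interior_Ioo] at hx
      rw [(hf' x hx).deriv]
      exact hf'nonpos x hx
  -- bound on the integrand
  have hbound : ∀ x ∈ Ioo (0:ℝ) T, x * f x ≤ F x := by
    intro x hx
    obtain ⟨ξ, hξ, hs⟩ := exists_hasDerivAt_eq_slope F f hx.1
      (hFcont.mono (Icc_subset_Icc le_rfl hx.2.le))
      (fun y hy => hf y ⟨hy.1.le, hy.2.le.trans hx.2.le⟩)
    have hξT : ξ ∈ Ioo (0:ℝ) T := ⟨hξ.1, hξ.2.trans hx.2⟩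
    have hfle : f x ≤ f ξ := hfanti hξT hx hξ.2.le
    have : x * f x ≤ x * f ξ := by
      exact mul_le_mul_of_nonneg_left hfle hx.1.le
    calc x * f x ≤ x * f ξ := this
      _ = F x := by rw [hs, hF0]; field_simp; simp only [sub_zero]; exact mul_div_cancel_left₀ _ hx.1.ne'
  -- integrability of the integrand
  set g : ℝ → ℝ := fun x => x * f x with hgdef
  have hgcont : ContinuousOn g (Ioo 0 T) := continuousOn_id.mul hfcont
  have hIntIoo : IntegrableOn g (Ioo 0 T) := by
    refine ⟨hgcont.aestronglyMeasurable measurableSet_Ioo, ?_⟩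
    apply HasFiniteIntegral.restrict_of_bounded (C := 1) measure_Ioo_lt_top
    filter_upwards [ae_restrict_mem measurableSet_Ioo] with x hx
    have h1 : 0 ≤ g x := mul_nonneg hx.1.le (hfpos x hx).le
    rw [Real.norm_eq_abs, abs_of_nonneg h1]
    exact (hbound x hx).trans (hFle1 x (Ioo_subset_Icc_self hx))
  have hIntIcc : IntegrableOn g (Icc 0 T) := by
    rwa [IntegrableOn, ← Measure.restrict_congr_set Ioo_ae_eq_Icc]
  have hII : ∀ c ∈ Icc (0:ℝ) T, IntervalIntegrable g volume 0 c := by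
    intro c hc
    apply IntegrableOn.intervalIntegrable
    apply hIntIcc.mono_set
    rw [uIcc_of_le hc.1]
    exact Icc_subset_Icc le_rfl hc.2
  -- continuity of the primitive
  have hGcont : ContinuousOn (fun c => ∫ x in (0:ℝ)..c, g x) (Icc 0 T) := by
    have h := continuousOn_primitive_interval (a := (0:ℝ)) (b := T) (μ := volume) (f := g)
      (by rwa [uIcc_of_le hT.le])
    rwa [uIcc_of_le hT.le] at h
  -- positivity of denominators
  have hdpos : ∀ c ∈ Icc (0:ℝ) T, 0 < F c * H + M :=
    fun c hc => add_pos_of_nonneg_of_pos (mul_nonneg (hFnonneg c hc) hH.le) hM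
  -- derivative of W
  set ψ : ℝ → ℝ := fun c => H * M / (F c * H + M) ^ 2 - c with hψdef
  have hWd : ∀ c ∈ Ioo (0:ℝ) T, HasDerivAt W (H * f c * ψ c) c := by
    intro c hc
    have hcI : c ∈ Icc (0:ℝ) T := Ioo_subset_Icc_self hc
    have hd := hdpos c hcI
    have h1 : HasDerivAt (fun x => F x * H ^ 2 / (F x * H + M))
        ((f c * H ^ 2 * (F c * H + M) - F c * H ^ 2 * (f c * H)) / (F c * H + M) ^ 2) c :=
      HasDerivAt.div ((hf c hcI).mul_const _)
        (((hf c hcI).mul_const H).add_const M) hd.ne'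
    have h2 : HasDerivAt (fun u => ∫ x in (0:ℝ)..u, g x) (g c) c :=
      integral_hasDerivAt_right (hII c hcI)
        (hgcont.stronglyMeasurableAtFilter isOpen_Ioo c hc)
        (hgcont.continuousAt (isOpen_Ioo.mem_nhds hc))
    have h3 := h1.sub (h2.const_mul H)
    have hEq : (fun x => F x * H ^ 2 / (F x * H + M) - H * ∫ t in (0:ℝ)..x, g t) = W :=
      funext fun x => (hW x).symm
    have h3 : HasDerivAt W ((f c * H ^ 2 * (F c * H + M) - F c * H ^ 2 * (f c * H)) / (F c * H + M) ^ 2 - H * g c) c := by rw [← hEq]; exact h3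
    convert h3 using 1
    rw [hψdef]
    field_simp
    ring
  -- continuity of W
  have hWcont : ContinuousOn W (Icc 0 T) := by
    have hc : ContinuousOn (fun c => F c * H ^ 2 / (F c * H + M) - H * ∫ x in (0:ℝ)..c, g x)
        (Icc 0 T) :=
      ((hFcont.mul continuousOn_const).div
        ((hFcont.mul continuousOn_const).add continuousOn_const)
        (fun c hc => (hdpos c hc).ne')).sub (continuousOn_const.mul hGcont)
    exact hc.congr fun c _ => hW c
  -- ψ is strictly antitone on [0, T]
  have hψanti : ∀ a ∈ Icc (0:ℝ) T, ∀ b ∈ Icc (0:ℝ) T, a < b → ψ b < ψ a := by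
    intro a ha b hb hab
    have hFa := hdpos a ha
    have hFle : F a * H + M ≤ F b * H + M := by
      have := (hFmono ha hb hab).le
      nlinarith
    have hdivle : H * M / (F b * H + M) ^ 2 ≤ H * M / (F a * H + M) ^ 2 := by
      apply div_le_div_of_nonneg_left (by positivity) (by positivity)
      nlinarith [hdpos b hb]
    simp only [hψdef]
    linarith
  have hψT : ψ T = H * M / (H + M) ^ 2 - T := by
    simp only [hψdef, hFT, one_mul]
  -- ψ continuity
  have hψcont : ContinuousOn ψ (Icc 0 T) := by
    apply ContinuousOn.sub _ continuousOn_id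
    apply ContinuousOn.div continuousOn_const
      (((hFcont.mul continuousOn_const).add continuousOn_const).pow 2)
    intro c hc
    exact pow_ne_zero 2 (hdpos c hc).ne'
  constructor
  · -- Case 1: H*M ≥ (H+M)² T
    intro hge c hc
    have hψnonneg : ∀ x ∈ Ioo (0:ℝ) T, 0 ≤ ψ x := by
      intro x hx
      have hψTnn : 0 ≤ ψ T := by
        rw [hψT]
        have : T ≤ H * M / (H + M) ^ 2 := by
          rw [le_div_iff₀ (by positivity)]
          linarith
        linarith
      have := hψanti x (Ioo_subset_Icc_self hx) T hTT hx.2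
      linarith
    have hmono : MonotoneOn W (Icc 0 T) := by
      apply monotoneOn_of_hasDerivWithinAt_nonneg (convex_Icc 0 T) hWcont
        (f' := fun x => H * f x * ψ x)
      · intro x hx
        rw [interior_Icc] at hx
        exact ((hWd x hx).hasDerivWithinAt)
      · intro x hx
        rw [interior_Icc] at hx
        exact mul_nonneg (mul_nonneg hH.le (hfpos x hx).le) (hψnonneg x hx)
    exact hmono hc hTT hc.2
  · -- Case 2: H*M < (H+M)² T
    intro hlt
    have hψ0 : 0 < ψ 0 := by
      simp only [hψdef, hF0, zero_mul, zero_add, sub_zero]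
      positivity
    have hψTneg : ψ T < 0 := by
      rw [hψT]
      have : H * M / (H + M) ^ 2 < T := by
        rw [div_lt_iff₀ (by positivity)]
        linarith
      linarith
    -- IVT to find the root
    obtain ⟨c, hcmem, hcψ⟩ : ∃ c ∈ Icc (0:ℝ) T, ψ c = 0 := by
      have := intermediate_value_Icc' hT.le hψcont (a := 0)
      have h0mem : (0:ℝ) ∈ Icc (ψ T) (ψ 0) := ⟨hψTneg.le, hψ0.le⟩
      obtain ⟨c, hc, hc0⟩ := this h0mem
      exact ⟨c, hc, hc0⟩
    have hcIoo : c ∈ Ioo (0:ℝ) T := by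
      constructor
      · rcases eq_or_lt_of_le hcmem.1 with h | h
        · rw [← h] at hcψ; exact absurd hcψ hψ0.ne'
        · exact h
      · rcases eq_or_lt_of_le hcmem.2 with h | h
        · rw [h] at hcψ; exact absurd hcψ hψTneg.ne
        · exact h
    -- strict monotonicity on [0,c] and strict antitonicity on [c,T]
    have hmono : StrictMonoOn W (Icc 0 c) := by
      apply strictMonoOn_of_hasDerivWithinAt_pos (convex_Icc 0 c)
        (hWcont.mono (Icc_subset_Icc le_rfl hcmem.2)) (f' := fun x => H * f x * ψ x)
      · intro x hx
        rw [interior_Icc] at hx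
        exact (hWd x ⟨hx.1, hx.2.trans hcIoo.2⟩).hasDerivWithinAt
      · intro x hx
        rw [interior_Icc] at hx
        have hxT : x ∈ Ioo (0:ℝ) T := ⟨hx.1, hx.2.trans hcIoo.2⟩
        have : ψ c < ψ x := hψanti x (Ioo_subset_Icc_self hxT) c hcmem hx.2
        rw [hcψ] at this
        exact mul_pos (mul_pos hH (hfpos x hxT)) this
    have hanti : StrictAntiOn W (Icc c T) := by
      apply strictAntiOn_of_hasDerivWithinAt_neg (convex_Icc c T)
        (hWcont.mono (Icc_subset_Icc hcmem.1 le_rfl)) (f' := fun x => H * f x * ψ x)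
      · intro x hx
        rw [interior_Icc] at hx
        exact (hWd x ⟨hcIoo.1.trans hx.1, hx.2⟩).hasDerivWithinAt
      · intro x hx
        rw [interior_Icc] at hx
        have hxT : x ∈ Ioo (0:ℝ) T := ⟨hcIoo.1.trans hx.1, hx.2⟩
        have : ψ x < ψ c := hψanti c hcmem x (Ioo_subset_Icc_self hxT) hx.1
        rw [hcψ] at this
        have hneg : H * f x * ψ x < 0 :=
          mul_neg_of_pos_of_neg (mul_pos hH (hfpos x hxT)) this
        exact hneg
    have hmax : ∀ x ∈ Icc (0:ℝ) T, W x ≤ W c := by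
      intro x hx
      rcases le_total x c with h | h
      · exact hmono.monotoneOn ⟨hx.1, h⟩ ⟨hcmem.1, le_rfl⟩ h
      · exact hanti.antitoneOn ⟨le_rfl, hcmem.2⟩ ⟨h, hx.2⟩ h
    refine ⟨c, ⟨hcIoo, hmax⟩, ?_⟩
    rintro c' ⟨hc'Ioo, hmax'⟩
    by_contra hne
    have hc'I : c' ∈ Icc (0:ℝ) T := Ioo_subset_Icc_self hc'Ioo
    have h1 : W c' ≤ W c := hmax c' hc'I
    have h2 : W c ≤ W c' := hmax' c (Ioo_subset_Icc_self hcIoo)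
    rcases lt_or_gt_of_ne hne with h | h
    · have : W c' < W c := hmono ⟨hc'I.1, h.le⟩ ⟨hcmem.1, le_rfl⟩ h
      linarith
    · have : W c' < W c := hanti ⟨le_rfl, hcmem.2⟩ ⟨h.le, hc'I.2⟩ h
      linarith
end

section
/- For a uniform cost distribution on [0,1], rewards to malicious agents are minimized at λ = M/(H+M): define for c ∈ [0,1) the equilibrium reward share λ(c) = (c + R/((1−c)·H)) / (R/(c·H + M) + R/((1−c)·H)) and the malicious reward share μ(c) = M·λ(c)/(c·H + M). Then μ(0) = M/(H+M), and μ(c) ≥ M/(H+M) for all c ∈ [0, c₁], where c₁ = (−M + √(M² + 4·H·R))/(2·H) is the equilibrium threshold corresponding to λ = 1 (assume c₁ < 1). -/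
/-- For a uniform cost distribution on `[0,1]`, rewards to malicious
agents are minimized at `λ = M/(H+M)`: with the equilibrium reward share
`λ(c) = (c + R/((1−c)·H)) / (R/(c·H + M) + R/((1−c)·H))` and malicious reward share
`μ(c) = M·λ(c)/(c·H + M)` for `c ∈ [0,1)`, one has `μ(0) = M/(H+M)` and
`μ(c) ≥ M/(H+M)` for all `c ∈ [0, c₁]`, where
`c₁ = (−M + √(M² + 4·H·R))/(2·H)` (assumed `< 1`) is the equilibrium threshold for
`λ = 1`. -/
theorem uniform_malicious_reward_minimized_at_boundary
    (H M R c₁ : ℝ)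
    (hH : 0 < H) (hM : 0 < M) (hMH : M < H) (hR : 0 < R)
    (hc₁ : c₁ = (-M + Real.sqrt (M ^ 2 + 4 * H * R)) / (2 * H))
    (hc₁lt : c₁ < 1) :
    M * ((0 + R / ((1 - 0) * H)) / (R / (0 * H + M) + R / ((1 - 0) * H)))
        / (0 * H + M) = M / (H + M) ∧
    ∀ c : ℝ, 0 ≤ c → c ≤ c₁ →
      M / (H + M)
        ≤ M * ((c + R / ((1 - c) * H)) / (R / (c * H + M) + R / ((1 - c) * H)))
            / (c * H + M) := by
  have hHM : (0:ℝ) < H + M := by linarith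
  constructor
  · field_simp
    ring
  · intro c hc0 hcc₁
    have hc1 : c < 1 := lt_of_le_of_lt hcc₁ hc₁lt
    have h1 : 0 < c * H + M := by nlinarith
    have h2 : 0 < (1 - c) * H := by nlinarith
    have key : M * ((c + R / ((1 - c) * H)) / (R / (c * H + M) + R / ((1 - c) * H)))
            / (c * H + M) = M * (c * (1 - c) * H + R) / (R * (H + M)) := by
      rw [div_add_div _ _ (ne_of_gt h1) (ne_of_gt h2)]
      field_simp [(sub_pos.mpr hc1).ne']
      ring
    rw [key, div_le_div_iff₀ hHM (by positivity)]
    nlinarith [mul_nonneg (mul_nonneg hM.le hHM.le) (mul_nonneg hc0 h2.le)]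
end

section
/- With delegation cost c_d > 0, for λ ∈ (0,1): there exists a unique c*_d ∈ (0,T) satisfying c*_d = λ·R/(F(c*_d)·H + M) − (1−λ)·R/((1−F(c*_d))·H) + c_d if and only if λ > (M·R − c_d·M·H)/((H+M)·R). Moreover, if additionally λ > M/(H+M), so that the zero-delegation-cost threshold equilibrium c* ∈ (0,T) with c* = λ·R/(F(c*)·H + M) − (1−λ)·R/((1−F(c*))·H) exists, then c*_d > c*. -/
set_option maxHeartbeats 1000000


/-- With delegation cost `c_d > 0` and `λ ∈ (0,1)`: there exists a
unique `c*_d ∈ (0,T)` satisfying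
`c*_d = λ·R/(F(c*_d)·H + M) − (1−λ)·R/((1−F(c*_d))·H) + c_d` if and only if
`λ > (M·R − c_d·M·H)/((H+M)·R)`. Moreover, if additionally `λ > M/(H+M)`, so that the
zero-delegation-cost threshold equilibrium `c* ∈ (0,T)` exists, then `c*_d > c*`. -/
theorem costly_delegation_equilibrium
    (H M R lam cd : ℝ) (T : EReal) (F : ℝ → ℝ)
    (hH : 0 < H) (hM : 0 < M) (hMH : M < H) (hR : 0 < R)
    (hT : 0 < T)
    (hF0 : F 0 = 0)
    (hFmono : ∀ c₁ c₂ : ℝ, 0 ≤ c₁ → c₁ < c₂ → (c₂ : EReal) < T → F c₁ < F c₂)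
    (hFcont : ContinuousOn F {c : ℝ | 0 ≤ c ∧ (c : EReal) < T})
    (hFlt1 : ∀ c : ℝ, 0 ≤ c → (c : EReal) < T → F c < 1)
    (hFlim : ∀ y : ℝ, y < 1 → ∃ c : ℝ, 0 ≤ c ∧ (c : EReal) < T ∧ y < F c)
    (hcd : 0 < cd) (hlam : 0 < lam ∧ lam < 1) :
    ((∃! c : ℝ, (0 < c ∧ (c : EReal) < T) ∧
        c = lam * R / (F c * H + M) - (1 - lam) * R / ((1 - F c) * H) + cd)
      ↔ (M * R - cd * M * H) / ((H + M) * R) < lam) ∧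
    (M / (H + M) < lam →
      ∀ cstar cstard : ℝ,
        (0 < cstar ∧ (cstar : EReal) < T) →
        cstar = lam * R / (F cstar * H + M) - (1 - lam) * R / ((1 - F cstar) * H) →
        (0 < cstard ∧ (cstard : EReal) < T) →
        cstard = lam * R / (F cstard * H + M)
                  - (1 - lam) * R / ((1 - F cstard) * H) + cd →
        cstar < cstard) := by
  obtain ⟨hl0, hl1⟩ := hlam
  have h1l : 0 < 1 - lam := by linarith
  have hFnonneg : ∀ c : ℝ, 0 ≤ c → (c : EReal) < T → 0 ≤ F c := by
    intro c hc hcT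
    rcases eq_or_lt_of_le hc with h | h
    · simp [← h, hF0]
    · have := hFmono 0 c le_rfl h hcT
      rw [hF0] at this; linarith
  -- strict antitonicity of the RHS map as a function of F-value
  have hφanti : ∀ x y : ℝ, 0 ≤ x → x < y → y < 1 →
      lam * R / (y * H + M) - (1 - lam) * R / ((1 - y) * H) <
      lam * R / (x * H + M) - (1 - lam) * R / ((1 - x) * H) := by
    intro x y hx hxy hy1
    have h1 : 0 < x * H + M := by nlinarith
    have h4 : 0 < (1 - y) * H := by nlinarith
    have ha : lam * R / (y * H + M) < lam * R / (x * H + M) :=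
      div_lt_div_of_pos_left (by positivity) h1 (by nlinarith)
    have hb : (1 - lam) * R / ((1 - x) * H) < (1 - lam) * R / ((1 - y) * H) :=
      div_lt_div_of_pos_left (by positivity) h4 (by nlinarith)
    linarith
  -- strict monotonicity of c ↦ c - RHS(c)
  have hmono : ∀ c₁ c₂ : ℝ, 0 ≤ c₁ → c₁ < c₂ → (c₂ : EReal) < T →
      c₁ - (lam * R / (F c₁ * H + M) - (1 - lam) * R / ((1 - F c₁) * H)) <
      c₂ - (lam * R / (F c₂ * H + M) - (1 - lam) * R / ((1 - F c₂) * H)) := by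
    intro c₁ c₂ hc₁ hlt hc₂T
    have hc₁T : (c₁ : EReal) < T := lt_trans (EReal.coe_lt_coe_iff.mpr hlt) hc₂T
    have hF12 := hFmono c₁ c₂ hc₁ hlt hc₂T
    have := hφanti (F c₁) (F c₂) (hFnonneg c₁ hc₁ hc₁T) hF12
      (hFlt1 c₂ (le_trans hc₁ hlt.le) hc₂T)
    linarith
  constructor
  · constructor
    · rintro ⟨c, ⟨⟨hc0, hcT⟩, heq⟩, -⟩
      have hm := hmono 0 c le_rfl hc0 hcT
      rw [hF0] at hm
      norm_num at hm
      -- hm : -(lam*R/M - (1-lam)*R/H) < c - (expr c)  (after simp); combine with heq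
      have hm' : 0 < lam * R / M - (1 - lam) * R / H + cd := by
        have hce : c - (lam * R / (F c * H + M) - (1 - lam) * R / ((1 - F c) * H)) = cd := by
          linarith
        linarith [hm, hce]
      have h3 : (lam * R / M - (1 - lam) * R / H + cd) * (M * H)
          = lam * R * H - (1 - lam) * R * M + cd * (M * H) := by
        field_simp
      have h2 : 0 < lam * R * H - (1 - lam) * R * M + cd * (M * H) := by
        rw [← h3]; exact mul_pos hm' (by positivity)
      rw [div_lt_iff₀ (by positivity)]
      nlinarith
    · intro hcond
      have hone : M * R - cd * M * H < lam * ((H + M) * R) :=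
        (div_lt_iff₀ (by positivity)).mp hcond
      have hm' : 0 < lam * R / M - (1 - lam) * R / H + cd := by
        have h3 : (lam * R * H - (1 - lam) * R * M + cd * (M * H)) / (M * H)
            = lam * R / M - (1 - lam) * R / H + cd := by
          field_simp
        rw [← h3]
        apply div_pos (by nlinarith) (by positivity)
      -- choose b with F b close to 1
      set K : ℝ := lam * R / M + cd + 1 with hKdef
      have hK : 0 < K := by positivity
      set ε : ℝ := (1 - lam) * R / (H * K) with hεdef
      have hε : 0 < ε := by positivity
      obtain ⟨b, hb0, hbT, hFb⟩ := hFlim (1 - ε) (by linarith)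
      have hFb1 : F b < 1 := hFlt1 b hb0 hbT
      have hFbnn : 0 ≤ F b := hFnonneg b hb0 hbT
      have h6 : 0 < 1 - F b := by linarith
      have hεH : ε * H = (1 - lam) * R / K := by
        rw [hεdef]; field_simp
      have h8 : (1 - lam) * R / (ε * H) = K := by
        rw [hεH]
        rw [div_div_eq_mul_div, mul_comm, mul_div_assoc]
        rw [div_self (by positivity : (1 - lam) * R ≠ 0), mul_one]
      have h7 : K < (1 - lam) * R / ((1 - F b) * H) := by
        rw [← h8]
        exact div_lt_div_of_pos_left (by positivity) (by positivity) (by nlinarith)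
      have h9 : lam * R / (F b * H + M) ≤ lam * R / M := by
        apply div_le_div_of_nonneg_left (by positivity) hM
        nlinarith
      set g : ℝ → ℝ := fun c =>
        c - (lam * R / (F c * H + M) - (1 - lam) * R / ((1 - F c) * H) + cd) with hgdef
      have hg0 : g 0 < 0 := by
        have : g 0 = 0 - (lam * R / (F 0 * H + M) - (1 - lam) * R / ((1 - F 0) * H) + cd) := rfl
        rw [this, hF0]
        norm_num
        linarith
      have hgb : 0 < g b := by
        have : g b = b - (lam * R / (F b * H + M) - (1 - lam) * R / ((1 - F b) * H) + cd) := rfl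
        rw [this]
        have : lam * R / (F b * H + M) - (1 - lam) * R / ((1 - F b) * H) + cd
            < lam * R / M - K + cd := by linarith
        rw [hKdef] at this
        linarith
      have hsub : Set.Icc (0 : ℝ) b ⊆ {c : ℝ | 0 ≤ c ∧ (c : EReal) < T} := by
        intro c hc
        exact ⟨hc.1, lt_of_le_of_lt (EReal.coe_le_coe_iff.mpr hc.2) hbT⟩
      have hFc : ContinuousOn F (Set.Icc 0 b) := hFcont.mono hsub
      have hgc : ContinuousOn g (Set.Icc 0 b) := by
        apply ContinuousOn.sub continuousOn_id
        apply ContinuousOn.add _ continuousOn_const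
        apply ContinuousOn.sub
        · exact ContinuousOn.div continuousOn_const
            ((hFc.mul continuousOn_const).add continuousOn_const)
            (fun c hc => by
              have := hFnonneg c (hsub hc).1 (hsub hc).2
              have : 0 < F c * H + M := by nlinarith
              exact ne_of_gt this)
        · exact ContinuousOn.div continuousOn_const
            ((continuousOn_const.sub hFc).mul continuousOn_const)
            (fun c hc => by
              have := hFlt1 c (hsub hc).1 (hsub hc).2
              have : 0 < (1 - F c) * H := by nlinarith
              exact ne_of_gt this)
      have hIoo : (0 : ℝ) ∈ Set.Ioo (g 0) (g b) := ⟨hg0, hgb⟩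
      obtain ⟨c, hcIoo, hgc0⟩ := intermediate_value_Ioo hb0 hgc hIoo
      have hc0 : 0 < c := hcIoo.1
      have hcT : (c : EReal) < T :=
        lt_trans (EReal.coe_lt_coe_iff.mpr hcIoo.2) hbT
      have hceq : c = lam * R / (F c * H + M) - (1 - lam) * R / ((1 - F c) * H) + cd := by
        have : c - (lam * R / (F c * H + M) - (1 - lam) * R / ((1 - F c) * H) + cd) = 0 := hgc0
        linarith
      refine ⟨c, ⟨⟨hc0, hcT⟩, hceq⟩, ?_⟩
      rintro c' ⟨⟨hc'0, hc'T⟩, hc'eq⟩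
      rcases lt_trichotomy c' c with h | h | h
      · exfalso
        have := hmono c' c hc'0.le h hcT
        have e1 : c' - (lam * R / (F c' * H + M) - (1 - lam) * R / ((1 - F c') * H)) = cd := by
          linarith
        have e2 : c - (lam * R / (F c * H + M) - (1 - lam) * R / ((1 - F c) * H)) = cd := by
          linarith
        linarith
      · exact h
      · exfalso
        have := hmono c c' hc0.le h hc'T
        have e1 : c' - (lam * R / (F c' * H + M) - (1 - lam) * R / ((1 - F c') * H)) = cd := by
          linarith
        have e2 : c - (lam * R / (F c * H + M) - (1 - lam) * R / ((1 - F c) * H)) = cd := by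
          linarith
        linarith
  · rintro - cstar cstard ⟨hs0, hsT⟩ hseq ⟨hd0, hdT⟩ hdeq
    rcases lt_trichotomy cstard cstar with h | h | h
    · exfalso
      have := hmono cstard cstar hd0.le h hsT
      have e1 : cstard - (lam * R / (F cstard * H + M)
          - (1 - lam) * R / ((1 - F cstard) * H)) = cd := by linarith
      have e2 : cstar - (lam * R / (F cstar * H + M)
          - (1 - lam) * R / ((1 - F cstar) * H)) = 0 := by linarith
      linarith
    · exfalso
      rw [h] at hdeq
      linarith
    · exact h
end

section
/- If 0 < λ ≤ M/(H+M), then λ·R/(F(c)·H + M) − (1−λ)·R/((1−F(c))·H) < 0 for every c ∈ (0,T) (the expected gain from running a pool over delegating is negative); moreover, if T > λ·R/(H+M), there exists a unique c' ∈ (0,T) satisfying c' = λ·R/(F(c')·H + M), the threshold below which honest agents run pools when agents above the threshold stay idle. -/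
/-- If `0 < λ ≤ M/(H+M)`, then
`λ·R/(F(c)·H + M) − (1−λ)·R/((1−F(c))·H) < 0` for every `c ∈ (0,T)` (the expected gain
from running a pool over delegating is negative); moreover, if `T > λ·R/(H+M)`, there
exists a unique `c' ∈ (0,T)` satisfying `c' = λ·R/(F(c')·H + M)`, the threshold below
which honest agents run pools when agents above the threshold stay idle. -/
theorem low_lambda_pool_gain_negative_and_idle_threshold
    (H M R lam : ℝ) (T : EReal) (F : ℝ → ℝ)
    (hH : 0 < H) (hM : 0 < M) (hMH : M < H) (hR : 0 < R)
    (hT : 0 < T)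
    (hF0 : F 0 = 0)
    (hFmono : ∀ c₁ c₂ : ℝ, 0 ≤ c₁ → c₁ < c₂ → (c₂ : EReal) < T → F c₁ < F c₂)
    (hFcont : ContinuousOn F {c : ℝ | 0 ≤ c ∧ (c : EReal) < T})
    (hFlt1 : ∀ c : ℝ, 0 ≤ c → (c : EReal) < T → F c < 1)
    (hFlim : ∀ y : ℝ, y < 1 → ∃ c : ℝ, 0 ≤ c ∧ (c : EReal) < T ∧ y < F c)
    (hlam : 0 < lam ∧ lam ≤ M / (H + M)) :
    (∀ c : ℝ, 0 < c → (c : EReal) < T →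
        lam * R / (F c * H + M) - (1 - lam) * R / ((1 - F c) * H) < 0) ∧
    (((lam * R / (H + M) : ℝ) : EReal) < T →
        ∃! c : ℝ, (0 < c ∧ (c : EReal) < T) ∧ c = lam * R / (F c * H + M)) := by
  obtain ⟨hlam0, hlamle⟩ := hlam
  have hHM : (0:ℝ) < H + M := by linarith
  have hlam1 : lam < 1 := lt_of_le_of_lt hlamle (by rw [div_lt_one hHM]; linarith)
  have hkey : lam * (H + M) ≤ M := (le_div_iff₀ hHM).mp hlamle
  have hlR : 0 < lam * R := mul_pos hlam0 hR
  -- uniqueness helper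
  have uniq_lt : ∀ a b : ℝ, ((0 < a ∧ (a : EReal) < T) ∧ a = lam * R / (F a * H + M)) →
      ((0 < b ∧ (b : EReal) < T) ∧ b = lam * R / (F b * H + M)) → a < b → False := by
    intro a b ⟨⟨ha0, haT⟩, hae⟩ ⟨⟨hb0, hbT⟩, hbe⟩ hab
    have hFa : 0 < F a := by have := hFmono 0 a le_rfl ha0 haT; rwa [hF0] at this
    have hFab : F a < F b := hFmono a b ha0.le hab hbT
    have hda : 0 < F a * H + M := by positivity
    have hlt : lam * R / (F b * H + M) < lam * R / (F a * H + M) := by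
      apply div_lt_div_of_pos_left hlR hda
      nlinarith
    rw [← hae, ← hbe] at hlt
    linarith
  constructor
  · intro c hc0 hcT
    have hFc0 : 0 < F c := by have := hFmono 0 c le_rfl hc0 hcT; rwa [hF0] at this
    have hFc1 : F c < 1 := hFlt1 c hc0.le hcT
    have hb : 0 < F c * H + M := by positivity
    have hd : 0 < (1 - F c) * H := by nlinarith
    rw [sub_neg, div_lt_div_iff₀ hb hd]
    nlinarith [mul_pos hR (mul_pos hFc0 hH),
      mul_nonneg hR.le (by linarith : (0:ℝ) ≤ M - lam * (H + M))]
  · intro hTlam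
    obtain ⟨s, hs1, hs2⟩ := EReal.lt_iff_exists_real_btwn.mp hTlam
    have hts : lam * R / (H + M) < s := by exact_mod_cast hs1
    have ht0 : 0 < lam * R / (H + M) := div_pos hlR hHM
    have hs0 : 0 < s := ht0.trans hts
    have h1 : lam * R < s * (H + M) := (div_lt_iff₀ hHM).mp hts
    have hsHM : lam * R / s < H + M := by rw [div_lt_iff₀ hs0]; linarith
    set y : ℝ := (lam * R / s - M) / H with hy
    have hy1 : y < 1 := by rw [hy, div_lt_one hH]; linarith
    obtain ⟨c, hc0, hcT, hyc⟩ := hFlim y hy1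
    set b : ℝ := max c s with hbdef
    have hbT : (b : EReal) < T := by
      rcases max_cases c s with ⟨h, _⟩ | ⟨h, _⟩ <;> rw [hbdef, h] <;> assumption
    have hsb : s ≤ b := le_max_right c s
    have hb0 : 0 < b := hs0.trans_le hsb
    have hFb : y < F b := by
      rcases (le_max_left c s).lt_or_eq with h | h
      · exact hyc.trans (hFmono c b hc0 h hbT)
      · rw [hbdef, ← h]; exact hyc
    have hden : lam * R / s < F b * H + M := by
      have hyH : y * H = lam * R / s - M := by rw [hy]; field_simp
      nlinarith [mul_lt_mul_of_pos_right hFb hH]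
    have hlrs : 0 < lam * R / s := div_pos hlR hs0
    have hbden : 0 < F b * H + M := hlrs.trans hden
    have hhb : lam * R / (F b * H + M) < b := by
      rw [div_lt_iff₀ hbden]
      calc lam * R = s * (lam * R / s) := by field_simp
        _ < s * (F b * H + M) := by exact mul_lt_mul_of_pos_left hden hs0
        _ ≤ b * (F b * H + M) := mul_le_mul_of_nonneg_right hsb hbden.le
    set h : ℝ → ℝ := fun x => lam * R / (F x * H + M) - x with hhdef
    have hsub : Set.Icc (0:ℝ) b ⊆ {c : ℝ | 0 ≤ c ∧ (c : EReal) < T} := by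
      intro x hx
      refine ⟨hx.1, lt_of_le_of_lt ?_ hbT⟩
      exact_mod_cast hx.2
    have hFnn : ∀ x ∈ Set.Icc (0:ℝ) b, 0 < F x * H + M := by
      intro x hx
      have hxT : (x : EReal) < T := (hsub hx).2
      rcases hx.1.lt_or_eq with h' | h'
      · have := hFmono 0 x le_rfl h' hxT
        rw [hF0] at this
        nlinarith
      · rw [← h', hF0]; nlinarith
    have hcont : ContinuousOn h (Set.Icc (0:ℝ) b) := by
      apply ContinuousOn.sub _ continuousOn_id
      apply ContinuousOn.div continuousOn_const
      · exact (((hFcont.mono hsub).mul continuousOn_const).add continuousOn_const)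
      · exact fun x hx => (hFnn x hx).ne'
    have h0pos : 0 < h 0 := by
      have : h 0 = lam * R / M := by simp [hhdef, hF0]
      rw [this]; positivity
    have hbneg : h b < 0 := sub_neg.mpr hhb
    have hmem : (0:ℝ) ∈ Set.Icc (h b) (h 0) := ⟨hbneg.le, h0pos.le⟩
    obtain ⟨x, hx, hhx⟩ := intermediate_value_Icc' hb0.le hcont hmem
    have hxeq : x = lam * R / (F x * H + M) := by
      have := sub_eq_zero.mp hhx
      exact this.symm
    have hx0 : 0 < x := by
      rcases hx.1.lt_or_eq with h' | h'
      · exact h'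
      · exfalso; rw [← h'] at hhx; rw [hhx] at h0pos; exact lt_irrefl _ h0pos
    have hxT : (x : EReal) < T := (hsub hx).2
    refine ⟨x, ⟨⟨hx0, hxT⟩, hxeq⟩, ?_⟩
    intro y' hy'
    rcases lt_trichotomy y' x with h' | h' | h'
    · exact absurd h' (fun h'' => uniq_lt y' x hy' ⟨⟨hx0, hxT⟩, hxeq⟩ h'')
    · exact h'
    · exact absurd h' (fun h'' => uniq_lt x y' ⟨⟨hx0, hxT⟩, hxeq⟩ hy' h'')
end

section
/- With costly delegation, blockchain security never exceeds the benchmark: let c_d > 0 and λ ∈ (0,1], and suppose c ∈ (0,T) satisfies both c = λ·R/(F(c)·H + M) − (1−λ)·R/((1−F(c))·H) + c_d and (1−λ)·R/((1−F(c))·H) ≥ c_d, and let c₁ ∈ (0,T) satisfy c₁ = R/(F(c₁)·H + M). Then c ≤ c₁, and hence F(c)·H ≤ F(c₁)·H. -/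
/-- With costly delegation, blockchain security never exceeds the
benchmark: let `c_d > 0` and `λ ∈ (0,1]`, and suppose `c ∈ (0,T)` satisfies both
`c = λ·R/(F(c)·H + M) − (1−λ)·R/((1−F(c))·H) + c_d` and
`(1−λ)·R/((1−F(c))·H) ≥ c_d`, and let `c₁ ∈ (0,T)` satisfy `c₁ = R/(F(c₁)·H + M)`.
Then `c ≤ c₁`, and hence `F(c)·H ≤ F(c₁)·H`. -/
theorem costly_delegation_security_below_benchmark
    (H M R lam cd : ℝ) (T : EReal) (F : ℝ → ℝ)
    (hH : 0 < H) (hM : 0 < M) (hMH : M < H) (hR : 0 < R)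
    (hT : 0 < T)
    (hF0 : F 0 = 0)
    (hFmono : ∀ c₁ c₂ : ℝ, 0 ≤ c₁ → c₁ < c₂ → (c₂ : EReal) < T → F c₁ < F c₂)
    (hFcont : ContinuousOn F {c : ℝ | 0 ≤ c ∧ (c : EReal) < T})
    (hFlt1 : ∀ c : ℝ, 0 ≤ c → (c : EReal) < T → F c < 1)
    (hFlim : ∀ y : ℝ, y < 1 → ∃ c : ℝ, 0 ≤ c ∧ (c : EReal) < T ∧ y < F c)
    (hcd : 0 < cd) (hlam : 0 < lam ∧ lam ≤ 1)
    (c c₁ : ℝ)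
    (hc : 0 < c ∧ (c : EReal) < T)
    (heq : c = lam * R / (F c * H + M) - (1 - lam) * R / ((1 - F c) * H) + cd)
    (hidle : cd ≤ (1 - lam) * R / ((1 - F c) * H))
    (hc₁ : 0 < c₁ ∧ (c₁ : EReal) < T)
    (heq₁ : c₁ = R / (F c₁ * H + M)) :
    c ≤ c₁ ∧ F c * H ≤ F c₁ * H := by
  obtain ⟨hcpos, hcT⟩ := hc
  obtain ⟨hc₁pos, hc₁T⟩ := hc₁
  have hFc0 : 0 < F c := by
    have := hFmono 0 c le_rfl hcpos hcT
    linarith [hF0 ▸ this]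
  have hFc₁0 : 0 < F c₁ := by
    have := hFmono 0 c₁ le_rfl hc₁pos hc₁T
    linarith [hF0 ▸ this]
  have hA : 0 < F c * H + M := by positivity
  have hA₁ : 0 < F c₁ * H + M := by positivity
  -- c ≤ R / (F c * H + M)
  have hkey : c ≤ R / (F c * H + M) := by
    have h1 : lam * R / (F c * H + M) ≤ R / (F c * H + M) := by
      apply (div_le_div_iff_of_pos_right hA).mpr
      nlinarith [hlam.2, hR]
    linarith [heq, hidle, h1]
  have hle : c ≤ c₁ := by
    by_contra h
    push_neg at h
    have hF : F c₁ < F c := hFmono c₁ c hc₁pos.le h hcT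
    have : R / (F c * H + M) < R / (F c₁ * H + M) := by
      apply div_lt_div_of_pos_left hR hA₁
      nlinarith
    linarith [heq₁ ▸ this]
  refine ⟨hle, ?_⟩
  rcases eq_or_lt_of_le hle with h | h
  · rw [h]
  · have := hFmono c c₁ hcpos.le h hc₁T
    nlinarith
end

section
/- Endogenous rewards: fix a security threshold cost c^θ ∈ [0,T) and let λ ∈ (0,1). There exists a unique c* ∈ (c^θ, T) satisfying c* = λ·R/(F(c*)·H + M) − (1−λ)·R/((1−F(c*))·H) if and only if λ > ((c^θ/R)·(F(c^θ)·H + M)·(1−F(c^θ))·H + F(c^θ)·H + M) / (H + M). -/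
set_option maxHeartbeats 1000000


/-- Endogenous rewards: fix a security threshold cost `c^θ ∈ [0,T)`
and let `λ ∈ (0,1)`. There exists a unique `c* ∈ (c^θ, T)` satisfying
`c* = λ·R/(F(c*)·H + M) − (1−λ)·R/((1−F(c*))·H)` if and only if
`λ > ((c^θ/R)·(F(c^θ)·H + M)·(1−F(c^θ))·H + F(c^θ)·H + M) / (H + M)`. -/
theorem endogenous_rewards_equilibrium
    (H M R lam cθ : ℝ) (T : EReal) (F : ℝ → ℝ)
    (hH : 0 < H) (hM : 0 < M) (hMH : M < H) (hR : 0 < R)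
    (hT : 0 < T)
    (hF0 : F 0 = 0)
    (hFmono : ∀ c₁ c₂ : ℝ, 0 ≤ c₁ → c₁ < c₂ → (c₂ : EReal) < T → F c₁ < F c₂)
    (hFcont : ContinuousOn F {c : ℝ | 0 ≤ c ∧ (c : EReal) < T})
    (hFlt1 : ∀ c : ℝ, 0 ≤ c → (c : EReal) < T → F c < 1)
    (hFlim : ∀ y : ℝ, y < 1 → ∃ c : ℝ, 0 ≤ c ∧ (c : EReal) < T ∧ y < F c)
    (hcθ : 0 ≤ cθ ∧ (cθ : EReal) < T)
    (hlam : 0 < lam ∧ lam < 1) :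
    (∃! c : ℝ, (cθ < c ∧ (c : EReal) < T) ∧
        c = lam * R / (F c * H + M) - (1 - lam) * R / ((1 - F c) * H))
      ↔ (cθ / R * (F cθ * H + M) * (1 - F cθ) * H + F cθ * H + M) / (H + M)
          < lam := by
  obtain ⟨hcθ0, hcθT⟩ := hcθ
  obtain ⟨hl0, hl1⟩ := hlam
  have hFθ0 : 0 ≤ F cθ := by
    rcases eq_or_lt_of_le hcθ0 with h | h
    · rw [← h, hF0]
    · exact le_of_lt (hF0 ▸ hFmono 0 cθ le_rfl h hcθT)
  have hFθ1 : F cθ < 1 := hFlt1 cθ hcθ0 hcθT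
  have hFge : ∀ x, cθ ≤ x → (x : EReal) < T → F cθ ≤ F x := by
    intro x hx hxT
    rcases eq_or_lt_of_le hx with h | h
    · rw [h]
    · exact le_of_lt (hFmono cθ x hcθ0 h hxT)
  have hA : 0 < F cθ * H + M := by nlinarith
  have hB : 0 < (1 - F cθ) * H := by nlinarith
  have hHM : (0:ℝ) < H + M := by linarith
  -- key strict monotonicity of the reward map
  have key : ∀ c₁ c₂ : ℝ, cθ ≤ c₁ → c₁ < c₂ → (c₂ : EReal) < T →
      lam * R / (F c₂ * H + M) - (1 - lam) * R / ((1 - F c₂) * H)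
        < lam * R / (F c₁ * H + M) - (1 - lam) * R / ((1 - F c₁) * H) := by
    intro c₁ c₂ h1 h12 h2T
    have h1T : (c₁ : EReal) < T := lt_trans (by exact_mod_cast h12) h2T
    have hf12 : F c₁ < F c₂ := hFmono c₁ c₂ (le_trans hcθ0 h1) h12 h2T
    have hf1 : 0 ≤ F c₁ := le_trans hFθ0 (hFge c₁ h1 h1T)
    have hf2lt : F c₂ < 1 := hFlt1 c₂ (le_trans hcθ0 (le_of_lt (lt_of_le_of_lt h1 h12))) h2T
    have hd1 : 0 < F c₁ * H + M := by nlinarith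
    have hd2 : 0 < F c₂ * H + M := by nlinarith
    have he1 : 0 < (1 - F c₁) * H := by nlinarith
    have he2 : 0 < (1 - F c₂) * H := by nlinarith
    have t1 : lam * R / (F c₂ * H + M) < lam * R / (F c₁ * H + M) :=
      div_lt_div_of_pos_left (by positivity) hd1 (by nlinarith)
    have t2 : (1 - lam) * R / ((1 - F c₁) * H) < (1 - lam) * R / ((1 - F c₂) * H) :=
      div_lt_div_of_pos_left (by nlinarith) he2 (by nlinarith)
    linarith
  -- algebraic identity relating the two inequalities
  have hid : lam * R / (F cθ * H + M) - (1 - lam) * R / ((1 - F cθ) * H) - cθ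
      = (lam * (H + M) - (cθ / R * (F cθ * H + M) * (1 - F cθ) * H + F cθ * H + M)) * R
        / ((F cθ * H + M) * ((1 - F cθ) * H)) := by
    have h1Fne : (1:ℝ) - F cθ ≠ 0 := ne_of_gt (by linarith)
    have hRne : R ≠ 0 := ne_of_gt hR
    have hHne : H ≠ 0 := ne_of_gt hH
    have hAne : F cθ * H + M ≠ 0 := ne_of_gt hA
    field_simp
    ring
  have hiff : (cθ / R * (F cθ * H + M) * (1 - F cθ) * H + F cθ * H + M) / (H + M) < lam
      ↔ cθ < lam * R / (F cθ * H + M) - (1 - lam) * R / ((1 - F cθ) * H) := by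
    constructor
    · intro h
      rw [div_lt_iff₀ hHM] at h
      have hnum : 0 < lam * (H + M)
          - (cθ / R * (F cθ * H + M) * (1 - F cθ) * H + F cθ * H + M) := by linarith
      have := div_pos (mul_pos hnum hR) (mul_pos hA hB)
      rw [← hid] at this
      linarith
    · intro h
      have h' : 0 < (lam * (H + M)
          - (cθ / R * (F cθ * H + M) * (1 - F cθ) * H + F cθ * H + M)) * R
          / ((F cθ * H + M) * ((1 - F cθ) * H)) := by rw [← hid]; linarith
      have h2 := mul_pos h' (mul_pos hA hB)
      rw [div_mul_cancel₀ _ (ne_of_gt (mul_pos hA hB))] at h2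
      have hnum : 0 < lam * (H + M)
          - (cθ / R * (F cθ * H + M) * (1 - F cθ) * H + F cθ * H + M) := by nlinarith
      rw [div_lt_iff₀ hHM]
      linarith
  constructor
  · rintro ⟨c, ⟨⟨hc1, hc2⟩, hceq⟩, -⟩
    have hk := key cθ c le_rfl hc1 hc2
    rw [← hceq] at hk
    exact hiff.mpr (lt_trans hc1 hk)
  · intro h
    have h0 : cθ < lam * R / (F cθ * H + M) - (1 - lam) * R / ((1 - F cθ) * H) := hiff.mp h
    obtain ⟨K, hKdef⟩ : ∃ K : ℝ, K = lam * R / M := ⟨_, rfl⟩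
    have hKpos : 0 < K := by rw [hKdef]; positivity
    obtain ⟨δ, hδdef⟩ : ∃ d : ℝ, d = (1 - lam) * R / (H * K * 2) := ⟨_, rfl⟩
    have hδpos : 0 < δ := by
      rw [hδdef]
      exact div_pos (by nlinarith) (by nlinarith)
    have hy : max (F cθ) (1 - δ) < 1 := max_lt hFθ1 (by linarith)
    obtain ⟨c₁, hc₁0, hc₁T, hc₁F⟩ := hFlim _ hy
    have hFc₁θ : F cθ < F c₁ := lt_of_le_of_lt (le_max_left _ _) hc₁F
    have hc₁θ : cθ < c₁ := by
      rcases lt_trichotomy cθ c₁ with h' | h' | h'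
      · exact h'
      · rw [h'] at hFc₁θ; exact absurd hFc₁θ (lt_irrefl _)
      · have := hFmono c₁ cθ hc₁0 h' hcθT; linarith
    have hFc₁1 : F c₁ < 1 := hFlt1 c₁ hc₁0 hc₁T
    have hFc₁0 : 0 ≤ F c₁ := le_trans hFθ0 (le_of_lt hFc₁θ)
    -- negativity at c₁
    have hneg : lam * R / (F c₁ * H + M) - (1 - lam) * R / ((1 - F c₁) * H) - c₁ < 0 := by
      have t1 : lam * R / (F c₁ * H + M) ≤ K := by
        rw [hKdef]
        apply div_le_div_of_nonneg_left (by positivity) hM (by nlinarith)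
      have h1F : 1 - F c₁ < δ := by
        have := le_max_right (F cθ) (1 - δ); linarith [hc₁F]
      have hpos1 : 0 < (1 - F c₁) * H := by nlinarith
      have heq : (1 - lam) * R / (δ * H) = 2 * K := by
        have hlam1 : (1:ℝ) - lam ≠ 0 := ne_of_gt (by linarith)
        rw [hδdef]
        field_simp
      have t2 : 2 * K < (1 - lam) * R / ((1 - F c₁) * H) := by
        rw [← heq]
        exact div_lt_div_of_pos_left (by nlinarith) hpos1 (by nlinarith)
      linarith
    have hsub : Set.Icc cθ c₁ ⊆ {c : ℝ | 0 ≤ c ∧ (c : EReal) < T} := by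
      intro x hx
      exact ⟨le_trans hcθ0 hx.1, lt_of_le_of_lt (EReal.coe_le_coe_iff.mpr hx.2) hc₁T⟩
    have hmem : ∀ x ∈ Set.Icc cθ c₁, 0 ≤ F x ∧ F x < 1 := by
      intro x hx
      have hx' := hsub hx
      exact ⟨le_trans hFθ0 (hFge x hx.1 hx'.2), hFlt1 x hx'.1 hx'.2⟩
    have hFc : ContinuousOn F (Set.Icc cθ c₁) := hFcont.mono hsub
    have hcont : ContinuousOn
        (fun c => lam * R / (F c * H + M) - (1 - lam) * R / ((1 - F c) * H) - c)
        (Set.Icc cθ c₁) := by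
      apply ContinuousOn.sub _ continuousOn_id
      apply ContinuousOn.sub
      · exact ContinuousOn.div continuousOn_const
          ((hFc.mul continuousOn_const).add continuousOn_const)
          (fun x hx => by have := hmem x hx; nlinarith [this.1, this.2])
      · exact ContinuousOn.div continuousOn_const
          ((continuousOn_const.sub hFc).mul continuousOn_const)
          (fun x hx => by have := hmem x hx; nlinarith [this.1, this.2])
    have h0mem : (0:ℝ) ∈ Set.Icc
        (lam * R / (F c₁ * H + M) - (1 - lam) * R / ((1 - F c₁) * H) - c₁)
        (lam * R / (F cθ * H + M) - (1 - lam) * R / ((1 - F cθ) * H) - cθ) :=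
      ⟨le_of_lt hneg, le_of_lt (by linarith)⟩
    obtain ⟨c, hcmem, hc0⟩ := intermediate_value_Icc' (le_of_lt hc₁θ) hcont h0mem
    have hc0' : lam * R / (F c * H + M) - (1 - lam) * R / ((1 - F c) * H) - c = 0 := hc0
    have hcT : (c : EReal) < T := lt_of_le_of_lt (EReal.coe_le_coe_iff.mpr hcmem.2) hc₁T
    have hcθc : cθ < c := by
      rcases eq_or_lt_of_le hcmem.1 with h' | h'
      · exfalso; rw [← h'] at hc0'; linarith
      · exact h'
    refine ⟨c, ⟨⟨hcθc, hcT⟩, by linarith⟩, ?_⟩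
    rintro c' ⟨⟨hc'1, hc'2⟩, hc'eq⟩
    by_contra hne
    rcases lt_or_gt_of_ne hne with hlt | hlt
    · have := key c' c (le_of_lt hc'1) hlt hcT
      rw [← hc'eq] at this
      linarith
    · have := key c c' (le_of_lt hcθc) hlt hc'2
      rw [← hc'eq] at this
      linarith
end

section
/- Discrete version: let n and m be positive integers with n > m, let r > 0 and λ ∈ (0,1). There exists a unique c* ∈ (0,T) satisfying c* = λ·r/(F(c*)·n + m) − (1−λ)·r/(n − F(c*)·n) if and only if λ > m/(n+m). -/
/-- Discrete version: let `n` and `m` be positive integers with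
`n > m`, let `r > 0` and `λ ∈ (0,1)`. There exists a unique `c* ∈ (0,T)` satisfying
`c* = λ·r/(F(c*)·n + m) − (1−λ)·r/(n − F(c*)·n)` if and only if `λ > m/(n+m)`. -/
theorem discrete_threshold_equilibrium
    (n m : ℕ) (r lam : ℝ) (T : EReal) (F : ℝ → ℝ)
    (hm : 0 < m) (hnm : m < n) (hr : 0 < r)
    (hT : 0 < T)
    (hF0 : F 0 = 0)
    (hFmono : ∀ c₁ c₂ : ℝ, 0 ≤ c₁ → c₁ < c₂ → (c₂ : EReal) < T → F c₁ < F c₂)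
    (hFcont : ContinuousOn F {c : ℝ | 0 ≤ c ∧ (c : EReal) < T})
    (hFlt1 : ∀ c : ℝ, 0 ≤ c → (c : EReal) < T → F c < 1)
    (hFlim : ∀ y : ℝ, y < 1 → ∃ c : ℝ, 0 ≤ c ∧ (c : EReal) < T ∧ y < F c)
    (hlam : 0 < lam ∧ lam < 1) :
    (∃! c : ℝ, (0 < c ∧ (c : EReal) < T) ∧
        c = lam * r / (F c * (n : ℝ) + (m : ℝ))
              - (1 - lam) * r / ((n : ℝ) - F c * (n : ℝ)))
      ↔ (m : ℝ) / ((n : ℝ) + (m : ℝ)) < lam := by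
  obtain ⟨hlam0, hlam1⟩ := hlam
  have hM : (0:ℝ) < (m:ℝ) := by exact_mod_cast hm
  have hN : (0:ℝ) < (n:ℝ) := by exact_mod_cast hm.trans hnm
  set H : ℝ → ℝ := fun c => lam * r / (F c * (n : ℝ) + (m : ℝ))
      - (1 - lam) * r / ((n : ℝ) - F c * (n : ℝ)) with hH
  -- nonnegativity of F on [0,T)
  have hFnn : ∀ c : ℝ, 0 ≤ c → (c : EReal) < T → 0 ≤ F c := by
    intro c hc hcT
    rcases hc.eq_or_lt with h | h
    · rw [← h, hF0]
    · have := hFmono 0 c le_rfl h hcT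
      rw [hF0] at this; exact this.le
  have h0T : ((0:ℝ) : EReal) < T := by simpa using hT
  -- denominators positive
  have hd1 : ∀ c : ℝ, 0 ≤ c → (c : EReal) < T → 0 < F c * (n:ℝ) + (m:ℝ) := by
    intro c hc hcT
    have := hFnn c hc hcT
    nlinarith
  have hd2 : ∀ c : ℝ, 0 ≤ c → (c : EReal) < T → 0 < (n:ℝ) - F c * (n:ℝ) := by
    intro c hc hcT
    have := hFlt1 c hc hcT
    nlinarith
  -- H strictly antitone
  have hHanti : ∀ c₁ c₂ : ℝ, 0 ≤ c₁ → c₁ < c₂ → (c₂ : EReal) < T → H c₂ < H c₁ := by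
    intro c₁ c₂ h1 h12 h2T
    have h1T : (c₁ : EReal) < T := lt_trans (by exact_mod_cast h12) h2T
    have hf : F c₁ < F c₂ := hFmono c₁ c₂ h1 h12 h2T
    have hA : lam * r / (F c₂ * (n:ℝ) + (m:ℝ)) < lam * r / (F c₁ * (n:ℝ) + (m:ℝ)) := by
      apply div_lt_div_of_pos_left (by positivity) (hd1 c₁ h1 h1T)
      nlinarith
    have hB : (1 - lam) * r / ((n:ℝ) - F c₁ * (n:ℝ)) < (1 - lam) * r / ((n:ℝ) - F c₂ * (n:ℝ)) := by
      apply div_lt_div_of_pos_left (by nlinarith) (hd2 c₂ (h1.trans h12.le) h2T)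
      nlinarith
    simp only [hH]
    linarith
  -- strict monotonicity of c ↦ c - H c
  have hmono : ∀ a b : ℝ, 0 ≤ a → a < b → (b : EReal) < T → a - H a < b - H b := by
    intro a b ha hab hbT
    have := hHanti a b ha hab hbT
    linarith
  have hH0 : H 0 = lam * r / (m:ℝ) - (1 - lam) * r / (n:ℝ) := by
    simp [hH, hF0]
  -- key equivalence at 0
  have hkey : ((m:ℝ) / ((n:ℝ) + (m:ℝ)) < lam) ↔ 0 < H 0 := by
    rw [hH0, div_lt_iff₀ (by positivity), sub_pos, div_lt_div_iff₀ hN hM]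
    constructor
    · intro h; nlinarith
    · intro h; nlinarith
  constructor
  · -- existence implies threshold
    rintro ⟨c, ⟨⟨hc0, hcT⟩, hceq⟩, -⟩
    by_contra hnot
    have hH0le : H 0 ≤ 0 := by
      by_contra h
      exact hnot (hkey.mpr (lt_of_not_ge h))
    have : H c < H 0 := hHanti 0 c le_rfl hc0 hcT
    have hcH : c = H c := hceq
    linarith
  · -- threshold implies unique existence
    intro hlt
    have hH0pos : 0 < H 0 := hkey.mp hlt
    -- find c₁ with F c₁ close enough to 1
    set y : ℝ := max 0 (1 - (1 - lam) * (m:ℝ) / (lam * (n:ℝ))) with hy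
    have hy1 : y < 1 := by
      apply max_lt one_pos
      have : 0 < (1 - lam) * (m:ℝ) / (lam * (n:ℝ)) :=
        div_pos (mul_pos (by linarith) hM) (mul_pos hlam0 hN)
      linarith
    obtain ⟨c₁, hc₁0, hc₁T, hc₁F⟩ := hFlim y hy1
    have hy0 : (0:ℝ) ≤ y := le_max_left _ _
    have hc₁pos : 0 < c₁ := by
      rcases hc₁0.eq_or_lt with h | h
      · exfalso; rw [← h, hF0] at hc₁F; linarith
      · exact h
    have hf0 : 0 ≤ F c₁ := hFnn c₁ hc₁0 hc₁T
    have hf1 : F c₁ < 1 := hFlt1 c₁ hc₁0 hc₁T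
    -- H c₁ < 0
    have hHc₁ : H c₁ < 0 := by
      have hF1 : 1 - (1 - lam) * (m:ℝ) / (lam * (n:ℝ)) < F c₁ :=
        lt_of_le_of_lt (le_max_right _ _) hc₁F
      have h1 : (1 - F c₁) * (lam * (n:ℝ)) < (1 - lam) * (m:ℝ) := by
        rw [← lt_div_iff₀ (by positivity)]; linarith
      have hgoal : lam * r * ((n:ℝ) - F c₁ * (n:ℝ)) < (1 - lam) * r * (F c₁ * (n:ℝ) + (m:ℝ)) := by
        nlinarith [mul_lt_mul_of_pos_right h1 hr,
          mul_nonneg (mul_nonneg hr.le (by linarith : (0:ℝ) ≤ 1 - lam))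
            (mul_nonneg hf0 hN.le)]
      have := (div_lt_div_iff₀ (hd1 c₁ hc₁0 hc₁T) (hd2 c₁ hc₁0 hc₁T)).mpr hgoal
      simp only [hH]
      linarith
    -- IVT on [0, c₁]
    have hsub : Set.Icc (0:ℝ) c₁ ⊆ {c : ℝ | 0 ≤ c ∧ (c : EReal) < T} := by
      intro x hx
      exact ⟨hx.1, lt_of_le_of_lt (EReal.coe_le_coe_iff.mpr hx.2) hc₁T⟩
    have hFc : ContinuousOn F (Set.Icc (0:ℝ) c₁) := hFcont.mono hsub
    have hcont : ContinuousOn (fun c => c - H c) (Set.Icc (0:ℝ) c₁) := by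
      apply continuousOn_id.sub
      apply ContinuousOn.sub
      · exact continuousOn_const.div ((hFc.mul continuousOn_const).add continuousOn_const)
          (fun x hx => (hd1 x (hsub hx).1 (hsub hx).2).ne')
      · exact continuousOn_const.div (continuousOn_const.sub (hFc.mul continuousOn_const))
          (fun x hx => (hd2 x (hsub hx).1 (hsub hx).2).ne')
    have hmem : (0:ℝ) ∈ Set.Ioo ((fun c => c - H c) 0) ((fun c => c - H c) c₁) := by
      constructor
      · simp only; linarith
      · simp only; linarith
    obtain ⟨c, hcIoo, hceq⟩ := intermediate_value_Ioo hc₁pos.le hcont hmem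
    have hcT : (c : EReal) < T := lt_of_le_of_lt (EReal.coe_le_coe_iff.mpr hcIoo.2.le) hc₁T
    have hceq' : c = H c := by
      simp only at hceq; linarith
    refine ⟨c, ⟨⟨hcIoo.1, hcT⟩, hceq'⟩, ?_⟩
    rintro c' ⟨⟨hc'0, hc'T⟩, hc'eq⟩
    have hc'H : c' = H c' := hc'eq
    by_contra hne
    rcases lt_or_gt_of_ne hne with h | h
    · have := hmono c' c hc'0.le h hcT
      linarith
    · have := hmono c c' hcIoo.1.le h hc'T
      linarith
end
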